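/- Let G be a finite connected simple graph, let u be a vertex of G of degree 2 with distinct neighbors v and w that are not adjacent in G, and let G' be obtained from G by smoothing at u, that is, by deleting u (together with the edges vu and uw) and adding the edge vw. Then scw(G') ≤ scw(G). -/
import Mathlib


open SimpleGraph

universe u

variable {V : Type u}

/-- A tree-cut decomposition of a finite simple graph `G`: a finite tree `T`
on a node type `B`, together with pairwise disjoint (possibly empty) bags
`bag b ⊆ V` whose union is all of `V`. -/
structure TreeCutDecomp [Finite V] (G : SimpleGraph V) where
  B : Type
  finB : Finite B
  T : SimpleGraph B
  isTree : T.IsTree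
  bag : B → Set V
  disj : Pairwise fun b d => Disjoint (bag b) (bag d)
  covers : ∀ v : V, ∃ b, v ∈ bag b

namespace TreeCutDecomp

variable [Finite V] {G : SimpleGraph V}

/-- The adhesion of a link `l` of `T`: the set of edges of `G` whose endpoints lie in
bags indexed by nodes in different components of `T - l` (equivalently, nodes such that
every walk between them uses `l`). -/
def linkAdh (D : TreeCutDecomp G) (l : Sym2 D.B) : Set (Sym2 V) :=
  {e | e ∈ G.edgeSet ∧ ∃ v w : V, ∃ b d : D.B, e = s(v, w) ∧ v ∈ D.bag b ∧ w ∈ D.bag d ∧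
    ∀ p : D.T.Walk b d, l ∈ p.edges}

/-- The adhesion of a node `n` of `T`: the set of edges of `G` whose endpoints lie in
bags indexed by nodes in different components of `T - n` (equivalently, nodes distinct
from `n` such that every walk between them passes through `n`). -/
def nodeAdh (D : TreeCutDecomp G) (n : D.B) : Set (Sym2 V) :=
  {e | e ∈ G.edgeSet ∧ ∃ v w : V, ∃ b d : D.B, e = s(v, w) ∧ v ∈ D.bag b ∧ w ∈ D.bag d ∧
    b ≠ n ∧ d ≠ n ∧ ∀ p : D.T.Walk b d, n ∈ p.support}

/-- The width of a tree-cut decomposition: the maximum of `|adh(l)|` over links `l` of `T`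
and of `|X_b| + |adh(b)|` over nodes `b` of `T`. -/
noncomputable def width (D : TreeCutDecomp G) : ℕ :=
  sSup ({n | ∃ l ∈ D.T.edgeSet, n = (D.linkAdh l).ncard} ∪
        {n | ∃ b : D.B, n = (D.bag b).ncard + (D.nodeAdh b).ncard})

end TreeCutDecomp

/-- The screewidth of `G`: the minimum width of a tree-cut decomposition of `G`. -/
noncomputable def screewidth [Finite V] (G : SimpleGraph V) : ℕ :=
  sInf {n | ∃ D : TreeCutDecomp G, D.width = n}

/-- The graph obtained from `G` by smoothing at the vertex `u` with neighbors `v` and `w`: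
delete `u` (together with its incident edges) and add the edge `vw`. -/
def smoothAt (G : SimpleGraph V) (u v w : V) : SimpleGraph {x : V // x ≠ u} :=
  SimpleGraph.fromRel fun a b =>
    G.Adj a.1 b.1 ∨ ((a.1 = v ∧ b.1 = w))

/- ------------------------------------------------------------------ -/
/- Auxiliary material                                                  -/
/- ------------------------------------------------------------------ -/

section Aux

open SimpleGraph

/-- Walk-condition symmetry for edges. -/
lemma walk_rev_edges {B : Type*} {T : SimpleGraph B} {l : Sym2 B} {b d : B}
    (h : ∀ p : T.Walk b d, l ∈ p.edges) : ∀ p : T.Walk d b, l ∈ p.edges := fun p => by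
  have := h p.reverse
  rwa [Walk.edges_reverse, List.mem_reverse] at this

/-- If every walk from `b` to `d` uses `l`, then for any `m`, either every walk from `b` to
`m` uses `l` or every walk from `m` to `d` uses `l`. -/
lemma walk_split_edges {B : Type*} {T : SimpleGraph B} {l : Sym2 B} {b d : B} (m : B)
    (h : ∀ p : T.Walk b d, l ∈ p.edges) :
    (∀ p : T.Walk b m, l ∈ p.edges) ∨ (∀ p : T.Walk m d, l ∈ p.edges) := by
  by_contra hc
  push_neg at hc
  obtain ⟨⟨p1, h1⟩, p2, h2⟩ := hc
  have := h (p1.append p2)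
  rw [Walk.edges_append, List.mem_append] at this
  tauto

/-- Walk-condition symmetry for support. -/
lemma walk_rev_support {B : Type*} {T : SimpleGraph B} {n : B} {b d : B}
    (h : ∀ p : T.Walk b d, n ∈ p.support) : ∀ p : T.Walk d b, n ∈ p.support := fun p => by
  have := h p.reverse
  rwa [Walk.support_reverse, List.mem_reverse] at this

/-- If every walk from `b` to `d` passes through `n`, then for any `m`, either every walk
from `b` to `m` passes through `n` or every walk from `m` to `d` does. -/
lemma walk_split_support {B : Type*} {T : SimpleGraph B} {n : B} {b d : B} (m : B)
    (h : ∀ p : T.Walk b d, n ∈ p.support) :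
    (∀ p : T.Walk b m, n ∈ p.support) ∨ (∀ p : T.Walk m d, n ∈ p.support) := by
  by_contra hc
  push_neg at hc
  obtain ⟨⟨p1, h1⟩, p2, h2⟩ := hc
  have := h (p1.append p2)
  rw [Walk.mem_support_append_iff] at this
  tauto

/-- The trivial tree-cut decomposition, with a single node whose bag is everything. -/
def trivialTCD [Finite V] (G : SimpleGraph V) : TreeCutDecomp G where
  B := Unit
  finB := inferInstance
  T := ⊥
  isTree := by
    refine ⟨?_, isAcyclic_bot⟩
    rw [connected_iff]
    exact ⟨fun a b => (Subsingleton.elim a b) ▸ Reachable.refl a, ⟨()⟩⟩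
  bag := fun _ => Set.univ
  disj := fun a b hab => absurd (Subsingleton.elim a b) hab
  covers := fun _ => ⟨(), trivial⟩

/-- The tree-cut decomposition of the smoothed graph induced by a decomposition of `G`:
the same tree, with bags restricted away from `u`. -/
def TreeCutDecomp.smooth [Finite V] {G : SimpleGraph V} (u v w : V)
    (D : TreeCutDecomp G) : TreeCutDecomp (smoothAt G u v w) where
  B := D.B
  finB := D.finB
  T := D.T
  isTree := D.isTree
  bag := fun b => Subtype.val ⁻¹' D.bag b
  disj := fun a b hab => (D.disj hab).preimage _
  covers := fun x => D.covers x.1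

variable [Finite V] {G : SimpleGraph V} {u v w : V}

lemma not_mem_map_val (e : Sym2 {x : V // x ≠ u}) : u ∉ Sym2.map Subtype.val e := by
  intro hu
  rw [Sym2.mem_map] at hu
  obtain ⟨a, _, ha⟩ := hu
  exact a.2 ha

/-- A non-special edge of the smoothed graph is an edge of `G`. -/
lemma adj_of_smooth_adj {a c : {x : V // x ≠ u}}
    (h : (smoothAt G u v w).Adj a c) (hns : s((a : V), (c : V)) ≠ s(v, w)) :
    G.Adj a.1 c.1 := by
  rw [smoothAt, SimpleGraph.fromRel_adj] at h
  obtain ⟨-, h⟩ := h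
  rcases h with (h | ⟨h1, h2⟩) | (h | ⟨h1, h2⟩)
  · exact h
  · exact absurd (by rw [h1, h2]) hns
  · exact h.symm
  · exact absurd (by rw [h1, h2, Sym2.eq_swap]) hns

lemma linkAdh_smooth_ncard_le (hadjv : G.Adj u v) (hadjw : G.Adj u w)
    (D : TreeCutDecomp G) (l : Sym2 D.B) :
    ((D.smooth u v w).linkAdh l).ncard ≤ (D.linkAdh l).ncard := by
  classical
  obtain ⟨bu, hbu⟩ := D.covers u
  set S := D.linkAdh l with hS
  set f : Sym2 {x : V // x ≠ u} → Sym2 V :=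
    fun e => if Sym2.map Subtype.val e = s(v, w)
      then (if s(v, u) ∈ S then s(v, u) else s(u, w)) else Sym2.map Subtype.val e with hf
  have hmaps : ∀ e ∈ (D.smooth u v w).linkAdh l, f e ∈ S := by
    rintro e ⟨hedge, a, c, b, d, heq, hab, hcd, hwalk⟩
    subst heq
    by_cases hsp : Sym2.map Subtype.val s((a : {x : V // x ≠ u}), c) = s(v, w)
    · have hor : s(v, u) ∈ S ∨ s(u, w) ∈ S := by
        rw [Sym2.map_pair_eq, Sym2.eq_iff] at hsp
        rcases hsp with ⟨hav, hcw⟩ | ⟨haw, hcv⟩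
        · rcases walk_split_edges bu hwalk with h1 | h2
          · exact Or.inl ⟨(G.mem_edgeSet).2 hadjv.symm, v, u, b, bu, rfl, hav ▸ hab, hbu, h1⟩
          · exact Or.inr ⟨(G.mem_edgeSet).2 hadjw, u, w, bu, d, rfl, hbu, hcw ▸ hcd, h2⟩
        · rcases walk_split_edges bu (walk_rev_edges hwalk) with h1 | h2
          · exact Or.inl ⟨(G.mem_edgeSet).2 hadjv.symm, v, u, d, bu, rfl, hcv ▸ hcd, hbu, h1⟩
          · exact Or.inr ⟨(G.mem_edgeSet).2 hadjw, u, w, bu, b, rfl, hbu, haw ▸ hab, h2⟩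
      simp only [hf, if_pos hsp]
      split_ifs with h
      · exact h
      · exact hor.resolve_left h
    · simp only [hf, if_neg hsp]
      have hadj : G.Adj a.1 c.1 := by
        rw [SimpleGraph.mem_edgeSet] at hedge
        exact adj_of_smooth_adj hedge (by rwa [Sym2.map_pair_eq] at hsp)
      rw [Sym2.map_pair_eq]
      exact ⟨(G.mem_edgeSet).2 hadj, a.1, c.1, b, d, rfl, hab, hcd, hwalk⟩
  have hinj : Set.InjOn f ((D.smooth u v w).linkAdh l) := by
    intro e1 h1 e2 h2 hfe
    have hu1 : ∀ e : Sym2 {x : V // x ≠ u}, Sym2.map Subtype.val e = s(v, w) → u ∈ f e := by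
      intro e he
      simp only [hf, if_pos he]
      split_ifs <;> simp [Sym2.mem_iff]
    by_cases hs1 : Sym2.map Subtype.val e1 = s(v, w) <;>
      by_cases hs2 : Sym2.map Subtype.val e2 = s(v, w)
    · exact Sym2.map.injective Subtype.val_injective (by rw [hs1, hs2])
    · exfalso
      have h1u : u ∈ f e1 := hu1 e1 hs1
      have h2u : u ∉ f e2 := by
        simp only [hf, if_neg hs2]
        exact not_mem_map_val e2
      rw [hfe] at h1u
      exact h2u h1u
    · exfalso
      have h2u : u ∈ f e2 := hu1 e2 hs2
      have h1u : u ∉ f e1 := by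
        simp only [hf, if_neg hs1]
        exact not_mem_map_val e1
      rw [← hfe] at h2u
      exact h1u h2u
    · apply Sym2.map.injective Subtype.val_injective
      simpa [hf, if_neg hs1, if_neg hs2] using hfe
  exact Set.ncard_le_ncard_of_injOn f hmaps hinj (Set.toFinite _)

lemma nodeAdh_smooth_le (hadjv : G.Adj u v) (hadjw : G.Adj u w)
    (D : TreeCutDecomp G) (n : D.B) :
    ((D.smooth u v w).bag n).ncard + ((D.smooth u v w).nodeAdh n).ncard ≤
      (D.bag n).ncard + (D.nodeAdh n).ncard := by
  classical
  have hvne : v ≠ u := fun h => G.irrefl (h ▸ hadjv)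
  have hwne : w ≠ u := fun h => G.irrefl (h ▸ hadjw)
  obtain ⟨bu, hbu⟩ := D.covers u
  -- non-special edges always transfer
  have htrans : ∀ e ∈ (D.smooth u v w).nodeAdh n, Sym2.map Subtype.val e ≠ s(v, w) →
      Sym2.map Subtype.val e ∈ D.nodeAdh n := by
    rintro e ⟨hedge, a, c, b, d, heq, hab, hcd, hbn, hdn, hwalk⟩ hns
    subst heq
    rw [Sym2.map_pair_eq] at hns ⊢
    have hadj : G.Adj a.1 c.1 := by
      rw [SimpleGraph.mem_edgeSet] at hedge
      exact adj_of_smooth_adj hedge hns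
    exact ⟨(G.mem_edgeSet).2 hadj, a.1, c.1, b, d, rfl, hab, hcd, hbn, hdn, hwalk⟩
  have hmapinj : Set.InjOn (Sym2.map (Subtype.val : {x : V // x ≠ u} → V)) Set.univ :=
    (Sym2.map.injective Subtype.val_injective).injOn
  by_cases hu : u ∈ D.bag n
  · -- the bag at `n` loses `u`, which pays for the possible extra edge `s(v,w)`
    set e0 : Sym2 {x : V // x ≠ u} := s(⟨v, hvne⟩, ⟨w, hwne⟩) with he0
    have h1 : ((D.smooth u v w).bag n).ncard ≤ (D.bag n \ {u}).ncard := by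
      refine Set.ncard_le_ncard_of_injOn Subtype.val ?_
        (Subtype.val_injective.injOn) (Set.toFinite _)
      exact fun a ha => ⟨ha, a.2⟩
    have h2 : (D.bag n \ {u}).ncard + 1 = (D.bag n).ncard :=
      Set.ncard_diff_singleton_add_one hu (Set.toFinite _)
    have h3 : ((D.smooth u v w).nodeAdh n \ {e0}).ncard ≤ (D.nodeAdh n).ncard := by
      apply Set.ncard_le_ncard_of_injOn (Sym2.map Subtype.val) _
        ((Sym2.map.injective Subtype.val_injective).injOn) (Set.toFinite _)
      rintro e ⟨he, hne0⟩
      apply htrans e he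
      intro hcon
      apply hne0
      apply Sym2.map.injective Subtype.val_injective
      rw [hcon, he0, Sym2.map_pair_eq]
    have h4 : ((D.smooth u v w).nodeAdh n).ncard ≤
        ((D.smooth u v w).nodeAdh n \ {e0}).ncard + 1 := by
      calc ((D.smooth u v w).nodeAdh n).ncard
          ≤ (((D.smooth u v w).nodeAdh n \ {e0}) ∪ {e0}).ncard := by
            apply Set.ncard_le_ncard _ (Set.toFinite _)
            intro x hx
            by_cases hxe : x = e0
            · exact Or.inr (by simp [hxe])
            · exact Or.inl ⟨hx, hxe⟩
        _ ≤ ((D.smooth u v w).nodeAdh n \ {e0}).ncard + 1 := by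
            simpa using Set.ncard_union_le ((D.smooth u v w).nodeAdh n \ {e0}) {e0}
    omega
  · -- `u` is not in the bag at `n`; the special edge maps to one of its halves
    have hbun : bu ≠ n := fun h => hu (h ▸ hbu)
    have h1 : ((D.smooth u v w).bag n).ncard ≤ (D.bag n).ncard := by
      apply Set.ncard_le_ncard_of_injOn Subtype.val
        (fun a ha => ha) (Subtype.val_injective.injOn) (Set.toFinite _)
    have h2 : ((D.smooth u v w).nodeAdh n).ncard ≤ (D.nodeAdh n).ncard := by
      set S := D.nodeAdh n with hS
      set f : Sym2 {x : V // x ≠ u} → Sym2 V :=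
        fun e => if Sym2.map Subtype.val e = s(v, w)
          then (if s(v, u) ∈ S then s(v, u) else s(u, w)) else Sym2.map Subtype.val e with hf
      have hmaps : ∀ e ∈ (D.smooth u v w).nodeAdh n, f e ∈ S := by
        rintro e he
        obtain ⟨hedge, a, c, b, d, heq, hab, hcd, hbn, hdn, hwalk⟩ := he
        subst heq
        by_cases hsp : Sym2.map Subtype.val s((a : {x : V // x ≠ u}), c) = s(v, w)
        · have hor : s(v, u) ∈ S ∨ s(u, w) ∈ S := by
            rw [Sym2.map_pair_eq, Sym2.eq_iff] at hsp
            rcases hsp with ⟨hav, hcw⟩ | ⟨haw, hcv⟩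
            · rcases walk_split_support bu hwalk with h1' | h2'
              · exact Or.inl ⟨(G.mem_edgeSet).2 hadjv.symm, v, u, b, bu, rfl,
                  hav ▸ hab, hbu, hbn, hbun, h1'⟩
              · exact Or.inr ⟨(G.mem_edgeSet).2 hadjw, u, w, bu, d, rfl,
                  hbu, hcw ▸ hcd, hbun, hdn, h2'⟩
            · rcases walk_split_support bu (walk_rev_support hwalk) with h1' | h2'
              · exact Or.inl ⟨(G.mem_edgeSet).2 hadjv.symm, v, u, d, bu, rfl,
                  hcv ▸ hcd, hbu, hdn, hbun, h1'⟩
              · exact Or.inr ⟨(G.mem_edgeSet).2 hadjw, u, w, bu, b, rfl,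
                  hbu, haw ▸ hab, hbun, hbn, h2'⟩
          simp only [hf, if_pos hsp]
          split_ifs with h
          · exact h
          · exact hor.resolve_left h
        · simp only [hf, if_neg hsp]
          exact htrans _ ⟨hedge, a, c, b, d, rfl, hab, hcd, hbn, hdn, hwalk⟩
            (by rwa [Sym2.map_pair_eq] at hsp ⊢)
      have hinj : Set.InjOn f ((D.smooth u v w).nodeAdh n) := by
        intro e1 h1' e2 h2' hfe
        have hu1 : ∀ e : Sym2 {x : V // x ≠ u}, Sym2.map Subtype.val e = s(v, w) →
            u ∈ f e := by
          intro e he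
          simp only [hf, if_pos he]
          split_ifs <;> simp [Sym2.mem_iff]
        by_cases hs1 : Sym2.map Subtype.val e1 = s(v, w) <;>
          by_cases hs2 : Sym2.map Subtype.val e2 = s(v, w)
        · exact Sym2.map.injective Subtype.val_injective (by rw [hs1, hs2])
        · exfalso
          have h1u : u ∈ f e1 := hu1 e1 hs1
          have h2u : u ∉ f e2 := by
            simp only [hf, if_neg hs2]
            exact not_mem_map_val e2
          rw [hfe] at h1u
          exact h2u h1u
        · exfalso
          have h2u : u ∈ f e2 := hu1 e2 hs2
          have h1u : u ∉ f e1 := by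
            simp only [hf, if_neg hs1]
            exact not_mem_map_val e1
          rw [← hfe] at h2u
          exact h1u h2u
        · apply Sym2.map.injective Subtype.val_injective
          simpa [hf, if_neg hs1, if_neg hs2] using hfe
      exact Set.ncard_le_ncard_of_injOn f hmaps hinj (Set.toFinite _)
    omega

lemma width_smooth_le (hadjv : G.Adj u v) (hadjw : G.Adj u w) (D : TreeCutDecomp G) :
    (D.smooth u v w).width ≤ D.width := by
  classical
  have : Finite D.B := D.finB
  obtain ⟨b0, -⟩ := D.covers u
  have hfin : ({n | ∃ l ∈ D.T.edgeSet, n = (D.linkAdh l).ncard} ∪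
        {n | ∃ b : D.B, n = (D.bag b).ncard + (D.nodeAdh b).ncard}).Finite := by
    apply Set.Finite.union
    · apply Set.Finite.subset (Set.finite_range fun l => (D.linkAdh l).ncard)
      rintro x ⟨l, -, rfl⟩
      exact ⟨l, rfl⟩
    · apply Set.Finite.subset
        (Set.finite_range fun b => (D.bag b).ncard + (D.nodeAdh b).ncard)
      rintro x ⟨b, rfl⟩
      exact ⟨b, rfl⟩
  have hbdd := hfin.bddAbove
  rw [TreeCutDecomp.width, TreeCutDecomp.width]
  apply csSup_le
  · exact ⟨_, Or.inr ⟨b0, rfl⟩⟩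
  · rintro x (⟨l, hl, rfl⟩ | ⟨b, rfl⟩)
    · exact le_trans (linkAdh_smooth_ncard_le hadjv hadjw D l)
        (le_csSup hbdd (Or.inl ⟨l, hl, rfl⟩))
    · exact le_trans (nodeAdh_smooth_le hadjv hadjw D b)
        (le_csSup hbdd (Or.inr ⟨b, rfl⟩))

end Aux

/-- If `u` is a `2`-valent vertex of a finite connected simple graph `G` with distinct,
nonadjacent neighbors `v` and `w`, then smoothing at `u` does not increase screewidth. -/
theorem screewidth_smooth_le [Finite V] (G : SimpleGraph V) (hG : G.Connected)
    (u v w : V) (hvw : v ≠ w) (hnadj : ¬ G.Adj v w)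
    (hnbrs : {x : V | G.Adj u x} = {v, w}) :
    screewidth (smoothAt G u v w) ≤ screewidth G := by
  classical
  have hadjv : G.Adj u v := by
    have : v ∈ {x : V | G.Adj u x} := by rw [hnbrs]; exact Or.inl rfl
    exact this
  have hadjw : G.Adj u w := by
    have : w ∈ {x : V | G.Adj u x} := by rw [hnbrs]; exact Or.inr rfl
    exact this
  have hne : {n | ∃ D : TreeCutDecomp G, D.width = n}.Nonempty := ⟨_, trivialTCD G, rfl⟩
  obtain ⟨D, hD⟩ := Nat.sInf_mem hne
  calc screewidth (smoothAt G u v w) ≤ (D.smooth u v w).width := Nat.sInf_le ⟨_, rfl⟩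
    _ ≤ D.width := width_smooth_le hadjv hadjw D
    _ = screewidth G := hD
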